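/- Selberg's identity for Kloosterman sums: for positive integers m, n, c, S(m, n; c) = ∑_{d | gcd(m, n, c)} d · S(mn/d², 1; c/d), where S(m, n; c) = ∑_{α mod c, gcd(α,c)=1} e((mα + n·α⁻¹)/c) and α⁻¹ denotes the multiplicative inverse of α modulo c. -/

import Mathlib

noncomputable def e (x : ℝ) : ℂ := Complex.exp (2 * Real.pi * Complex.I * x)

/-- The Kloosterman sum S(m,n;c) = ∑*_{α mod c} e((mα + nᾱ)/c). -/
noncomputable def kloos (m n c : ℕ) : ℂ :=
  ∑ α ∈ Finset.filter (fun α => Nat.Coprime α c) (Finset.range c),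
    e (((m * α + n * ((α : ZMod c)⁻¹).val : ℕ) : ℝ) / (c : ℝ))


noncomputable def E (c : ℕ) (a : ℤ) : ℂ := e ((a : ℝ) / (c : ℝ))
noncomputable def EZ (c : ℕ) (x : ZMod c) : ℂ := E c (x.val : ℤ)
noncomputable def kloosZ (m n c : ℕ) [NeZero c] : ℂ :=
  ∑ x : ZMod c, if IsUnit x then EZ c (m * x + n * x⁻¹) else 0


lemma e_add (x y : ℝ) : e (x + y) = e x * e y := by
  simp only [e, ← Complex.exp_add]; push_cast; ring_nf

lemma e_int (k : ℤ) : e k = 1 := by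
  simp only [e]
  rw [show 2 * (Real.pi:ℂ) * Complex.I * ((k:ℝ):ℂ) = (k:ℤ) * (2 * Real.pi * Complex.I) by
    push_cast; ring]
  exact Complex.exp_int_mul_two_pi_mul_I k

lemma e_nat_mul (t : ℕ) (x : ℝ) : e (t * x) = e x ^ t := by
  simp only [e, ← Complex.exp_nat_mul]
  push_cast; ring_nf

lemma e_eq_one_iff (x : ℝ) : e x = 1 ↔ ∃ k : ℤ, x = k := by
  constructor
  · intro h
    rw [e, Complex.exp_eq_one_iff] at h
    obtain ⟨k, hk⟩ := h
    refine ⟨k, ?_⟩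
    have h2 : (2 * (Real.pi:ℂ) * Complex.I) ≠ 0 := by
      simp [Real.pi_ne_zero, Complex.I_ne_zero]
    have hx : (x : ℂ) = k := by
      have : (2 * (Real.pi:ℂ) * Complex.I) * x = (2 * (Real.pi:ℂ) * Complex.I) * k := by
        rw [hk]; ring
      exact mul_left_cancel₀ h2 this
    exact_mod_cast hx
  · rintro ⟨k, rfl⟩; exact e_int k


lemma E_add (c : ℕ) (a b : ℤ) : E c (a + b) = E c a * E c b := by
  rw [E, E, E, ← e_add]; push_cast; ring_nf

lemma E_int_mul (c : ℕ) (hc : c ≠ 0) (k : ℤ) : E c (c * k) = 1 := by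
  rw [E]
  have hc0 : (c:ℝ) ≠ 0 := by exact_mod_cast hc
  rw [show (((c * k : ℤ)):ℝ) / (c:ℝ) = ((k:ℤ):ℝ) by push_cast; field_simp]
  exact e_int k

lemma E_mod (c : ℕ) (hc : c ≠ 0) {a b : ℤ} (h : (c:ℤ) ∣ a - b) : E c a = E c b := by
  obtain ⟨k, hk⟩ := h
  have ha : a = b + c * k := by linarith [hk]
  subst ha
  rw [E_add, E_int_mul c hc, mul_one]

lemma E_pow (c : ℕ) (a : ℤ) (t : ℕ) : E c (a * t) = (E c a) ^ t := by
  rw [E, E, ← e_nat_mul]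
  congr 1
  push_cast; ring

lemma sum_E_geom (c : ℕ) (a : ℤ) :
    ∑ t ∈ Finset.range c, E c (a * t) = if (c:ℤ) ∣ a then (c : ℂ) else 0 := by
  rcases Nat.eq_zero_or_pos c with rfl | hc
  · by_cases h : (0:ℤ) ∣ a <;> simp [h]
  have hc0 : (c:ℝ) ≠ 0 := by positivity
  by_cases h : (c:ℤ) ∣ a
  · rw [if_pos h]
    have key : ∀ t ∈ Finset.range c, E c (a * t) = 1 := by
      intro t _
      obtain ⟨k, rfl⟩ := h
      rw [show (c:ℤ) * k * t = (c:ℤ) * (k * t) by ring, E_int_mul c hc.ne']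
    rw [Finset.sum_congr rfl key]
    simp
  · rw [if_neg h]
    simp_rw [E_pow]
    have hne : E c a ≠ 1 := by
      intro hone
      rw [E, e_eq_one_iff] at hone
      obtain ⟨k, hk⟩ := hone
      apply h
      refine ⟨k, ?_⟩
      have : (a : ℝ) = c * k := by
        field_simp at hk; rw [hk]
      exact_mod_cast this
    rw [geom_sum_eq hne]
    have hEc : (E c a) ^ c = 1 := by
      rw [← E_pow]
      rw [show a * (c:ℕ) = (c:ℤ) * a by push_cast; ring, E_int_mul c hc.ne']
    rw [hEc]
    simp



lemma EZ_intCast (c : ℕ) [NeZero c] (a : ℤ) : EZ c (a : ZMod c) = E c a := by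
  rw [EZ]
  apply E_mod c (NeZero.ne c)
  have h := ZMod.val_intCast (n := c) a
  rw [h]
  have : a % (c:ℤ) - a = -((c:ℤ) * (a / (c:ℤ))) := by rw [Int.emod_def]; ring
  rw [this]
  exact dvd_neg.mpr ⟨_, rfl⟩

lemma EZ_add (c : ℕ) [NeZero c] (a b : ZMod c) : EZ c (a + b) = EZ c a * EZ c b := by
  have : a + b = ((a.val + b.val : ℤ) : ZMod c) := by push_cast [ZMod.natCast_val, ZMod.cast_id]; ring
  rw [this, EZ_intCast, E_add]; rfl

lemma EZ_natCast (c : ℕ) [NeZero c] (a : ℕ) : EZ c (a : ZMod c) = E c a := by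
  rw [← EZ_intCast c (a:ℤ)]; push_cast; rfl

/-- orthogonality -/
lemma sum_EZ (c : ℕ) [NeZero c] (a : ZMod c) :
    ∑ x : ZMod c, EZ c (a * x) = if a = 0 then (c:ℂ) else 0 := by
  have key : ∑ x : ZMod c, EZ c (a * x) = ∑ t ∈ Finset.range c, E c ((a.val : ℤ) * t) := by
    rw [Finset.sum_nbij' (i := fun (x : ZMod c) => x.val) (j := fun (t : ℕ) => ((t : ZMod c)))]
    · intro x _; exact Finset.mem_range.mpr (ZMod.val_lt x)
    · intro t _; exact Finset.mem_univ _
    · intro x _; simp [ZMod.natCast_val, ZMod.cast_id]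
    · intro t ht; exact ZMod.val_natCast_of_lt (Finset.mem_range.mp ht)
    · intro x _
      have : a * x = ((a.val * x.val : ℤ) : ZMod c) := by
        push_cast [ZMod.natCast_val, ZMod.cast_id]; ring
      rw [this, EZ_intCast]
  rw [key, sum_E_geom]
  have : ((c:ℤ) ∣ (a.val : ℤ)) ↔ a = 0 := by
    rw [Int.natCast_dvd_natCast]
    constructor
    · intro h
      have hlt := ZMod.val_lt a
      have : a.val = 0 := by
        rcases Nat.eq_zero_or_pos a.val with h0 | hpos
        · exact h0
        · exact absurd (Nat.le_of_dvd hpos h) (by omega)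
      exact (ZMod.val_eq_zero a).mp this
    · rintro rfl; simp
  by_cases h : a = 0
  · rw [if_pos h, if_pos (this.mpr h)]
  · rw [if_neg h, if_neg (fun hh => h (this.mp hh))]



lemma sum_units_eq (c : ℕ) [NeZero c] (f : ZMod c → ℂ) :
    ∑ α ∈ Finset.filter (fun α => Nat.Coprime α c) (Finset.range c), f (α : ZMod c)
      = ∑ x : ZMod c, if IsUnit x then f x else 0 := by
  rw [← Finset.sum_filter]
  rw [Finset.sum_nbij' (i := fun (α : ℕ) => ((α : ZMod c)))
      (j := fun (x : ZMod c) => x.val)]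
  · intro α hα
    simp only [Finset.mem_filter, Finset.mem_range] at hα
    simp only [Finset.mem_filter, Finset.mem_univ, true_and]
    exact (ZMod.isUnit_iff_coprime α c).mpr hα.2
  · intro x hx
    simp only [Finset.mem_filter, Finset.mem_univ, true_and] at hx
    simp only [Finset.mem_filter, Finset.mem_range]
    refine ⟨ZMod.val_lt x, ?_⟩
    rw [← ZMod.isUnit_iff_coprime]
    rwa [ZMod.natCast_val, ZMod.cast_id]
  · intro α hα
    simp only [Finset.mem_filter, Finset.mem_range] at hα
    exact ZMod.val_natCast_of_lt hα.1
  · intro x _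
    rw [ZMod.natCast_val, ZMod.cast_id]
  · intros; rfl

lemma kloos_eq_kloosZ (m n c : ℕ) [NeZero c] : kloos m n c = kloosZ m n c := by
  rw [kloosZ, ← sum_units_eq c (fun x => EZ c (m * x + n * x⁻¹))]
  apply Finset.sum_congr rfl
  intro α hα
  have h1 : (↑m * (α:ZMod c) + ↑n * (α:ZMod c)⁻¹)
      = ((m * α + n * ((α : ZMod c)⁻¹).val : ℕ) : ZMod c) := by
    push_cast [ZMod.natCast_val, ZMod.cast_id]
    ring
  rw [h1, EZ_natCast]
  rw [E]
  push_cast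
  rfl


lemma cruxA (m n c : ℕ) [NeZero c] :
    kloosZ m n c =
      ∑ u : ZMod c, ∑ x : ZMod c,
        if (n : ZMod c) + u * x = 0 then EZ c (m * x - u) else 0 := by
  have hc0 : (c : ℂ) ≠ 0 := by
    exact_mod_cast Nat.pos_of_ne_zero (NeZero.ne c) |>.ne'
  apply mul_left_cancel₀ hc0
  have key1 : ∑ x : ZMod c, ∑ y : ZMod c, ∑ u : ZMod c,
      EZ c ((m * x + n * y) + (x * y - 1) * u) = (c:ℂ) * kloosZ m n c := by
    have inner : ∀ x y : ZMod c, ∑ u : ZMod c, EZ c ((m * x + n * y) + (x * y - 1) * u)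
        = if x * y = 1 then (c:ℂ) * EZ c (m * x + n * y) else 0 := by
      intro x y
      simp_rw [EZ_add, ← Finset.mul_sum, sum_EZ, sub_eq_zero]
      by_cases h : x * y = 1
      · rw [if_pos h, if_pos h]; ring
      · rw [if_neg h, if_neg h]; ring
    simp_rw [inner]
    have inner2 : ∀ x : ZMod c, (∑ y : ZMod c, if x * y = 1 then (c:ℂ) * EZ c (m * x + n * y) else 0)
        = if IsUnit x then (c:ℂ) * EZ c (m * x + n * x⁻¹) else 0 := by
      intro x
      by_cases hx : IsUnit x
      · rw [if_pos hx]
        have huniq : ∀ y : ZMod c, x * y = 1 ↔ y = x⁻¹ := by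
          intro y
          constructor
          · intro h
            have : x⁻¹ * (x * y) = x⁻¹ * 1 := by rw [h]
            rwa [← mul_assoc, ZMod.inv_mul_of_unit x hx, one_mul, mul_one] at this
          · rintro rfl; exact ZMod.mul_inv_of_unit x hx
        simp_rw [huniq]
        rw [Finset.sum_ite_eq' Finset.univ (x⁻¹) (fun y => (c:ℂ) * EZ c (m * x + n * y))]
        simp
      · rw [if_neg hx]
        apply Finset.sum_eq_zero
        intro y _
        rw [if_neg (fun h => hx (IsUnit.of_mul_eq_one (a := x) y h))]
    simp_rw [inner2, kloosZ, Finset.mul_sum]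
    apply Finset.sum_congr rfl
    intro x _
    by_cases hx : IsUnit x <;> simp [hx]
  have key2 : ∑ x : ZMod c, ∑ y : ZMod c, ∑ u : ZMod c,
      EZ c ((m * x + n * y) + (x * y - 1) * u)
      = (c:ℂ) * ∑ u : ZMod c, ∑ x : ZMod c,
          if (n : ZMod c) + u * x = 0 then EZ c (m * x - u) else 0 := by
    have swap1 : ∀ x : ZMod c, ∑ y : ZMod c, ∑ u : ZMod c,
        EZ c ((m * x + n * y) + (x * y - 1) * u)
        = ∑ u : ZMod c, ∑ y : ZMod c, EZ c ((m * x + n * y) + (x * y - 1) * u) := by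
      intro x; exact Finset.sum_comm
    simp_rw [swap1]
    rw [Finset.sum_comm]
    have inner : ∀ u x : ZMod c, ∑ y : ZMod c, EZ c ((m * x + n * y) + (x * y - 1) * u)
        = if (n : ZMod c) + u * x = 0 then (c:ℂ) * EZ c (m * x - u) else 0 := by
      intro u x
      have harg : ∀ y : ZMod c, (m * x + n * y) + (x * y - 1) * u
          = (m * x - u) + ((n : ZMod c) + u * x) * y := by intro y; ring
      simp_rw [harg, EZ_add, ← Finset.mul_sum, sum_EZ]
      by_cases h : (n : ZMod c) + u * x = 0
      · rw [if_pos h, if_pos h]; ring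
      · rw [if_neg h, if_neg h]; ring
    simp_rw [inner, Finset.mul_sum]
    apply Finset.sum_congr rfl; intro u _
    apply Finset.sum_congr rfl; intro x _
    by_cases h : (n : ZMod c) + u * x = 0 <;> simp [h]
  rw [← key1, key2]



lemma E_mul_left (d q : ℕ) (hd : d ≠ 0) (a : ℤ) : E (d * q) ((d:ℤ) * a) = E q a := by
  rw [E, E]
  congr 1
  rcases Nat.eq_zero_or_pos q with rfl | hq
  · simp
  · have hd0 : (d:ℝ) ≠ 0 := by exact_mod_cast hd
    have hq0 : (q:ℝ) ≠ 0 := by positivity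
    push_cast
    field_simp

lemma sum_zmod_eq_range (c : ℕ) [NeZero c] (f : ZMod c → ℂ) :
    ∑ x : ZMod c, f x = ∑ w ∈ Finset.range c, f (w : ZMod c) := by
  rw [Finset.sum_nbij' (i := fun (x : ZMod c) => x.val) (j := fun (w : ℕ) => ((w : ZMod c)))]
  · intro x _; exact Finset.mem_range.mpr (ZMod.val_lt x)
  · intro w _; exact Finset.mem_univ _
  · intro x _; rw [ZMod.natCast_val, ZMod.cast_id]
  · intro w hw; exact ZMod.val_natCast_of_lt (Finset.mem_range.mp hw)
  · intro x _; rw [ZMod.natCast_val, ZMod.cast_id]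

lemma Heval (m n c d v : ℕ) (hc : 0 < c) (hd : d ∣ c) (hdpos : 0 < d)
    (hv : v < c / d) (hcop : Nat.Coprime v (c / d)) [NeZero c] [NeZero (c / d)] :
    ∑ x : ZMod c, (if (n : ZMod c) + (d * v : ℕ) * x = 0 then EZ c ((m : ZMod c) * x - (d * v : ℕ)) else 0)
    = if d ∣ n ∧ d ∣ m then
        (d:ℂ) * EZ (c/d) ((m/d : ℕ) * (-((n/d : ℕ) : ZMod (c/d)) * ((v : ZMod (c/d)))⁻¹) - (v : ZMod (c/d)))
      else 0 := by
  set q := c / d with hq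
  have hqpos : 0 < q := Nat.pos_of_ne_zero (NeZero.ne q)
  have hcdq : c = d * q := by rw [hq, Nat.mul_div_cancel' hd]
  -- convert sum to range c with divisibility condition
  rw [sum_zmod_eq_range]
  have hcond : ∀ w : ℕ, ((n : ZMod c) + (d * v : ℕ) * (w : ZMod c) = 0) ↔ c ∣ n + d * v * w := by
    intro w
    rw [← ZMod.natCast_eq_zero_iff]
    constructor
    · intro h; rw [← h]; push_cast; ring
    · intro h; rw [← h]; push_cast; ring
  simp_rw [hcond]
  rw [← Finset.sum_filter]
  by_cases hdn : d ∣ n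
  swap
  · rw [if_neg (fun h => hdn h.1)]
    apply Finset.sum_eq_zero
    intro w hw
    simp only [Finset.mem_filter, Finset.mem_range] at hw
    exfalso
    apply hdn
    have h1 : d ∣ n + d * v * w := dvd_trans hd hw.2
    have h2 : d ∣ d * v * w := ⟨v * w, by ring⟩
    exact (Nat.dvd_add_right h2).mp (by rwa [add_comm] at h1)
  -- now d ∣ n
  set n' := n / d with hn'
  have hnd : n = d * n' := by rw [hn', Nat.mul_div_cancel' hdn]
  set x₀ : ℕ := ((-( (n' : ZMod q)) * ((v : ZMod q))⁻¹).val) with hx₀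
  have hx₀lt : x₀ < q := ZMod.val_lt _
  have hvunit : IsUnit (v : ZMod q) := (ZMod.isUnit_iff_coprime v q).mpr hcop
  have hvx₀ : (v : ZMod q) * (x₀ : ZMod q) = -(n' : ZMod q) := by
    rw [hx₀, ZMod.natCast_val, ZMod.cast_id]
    rw [show (v : ZMod q) * (-(n' : ZMod q) * ((v : ZMod q))⁻¹)
        = -(n' : ZMod q) * ((v : ZMod q) * ((v : ZMod q))⁻¹) by ring]
    rw [ZMod.mul_inv_of_unit _ hvunit, mul_one]
  -- characterize solutions
  have hsol : ∀ w : ℕ, w < c → (c ∣ n + d * v * w ↔ (w : ZMod q) = (x₀ : ZMod q)) := by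
    intro w hw
    constructor
    · intro hdvd
      have hq_dvd : q ∣ n' + v * w := by
        obtain ⟨k, hk⟩ := hdvd
        refine ⟨k, ?_⟩
        have : d * (n' + v * w) = d * (q * k) := by
          calc d * (n' + v * w) = n + d * v * w := by rw [hnd]; ring
            _ = c * k := hk
            _ = d * (q * k) := by rw [hcdq]; ring
        exact Nat.eq_of_mul_eq_mul_left hdpos this
      have hzq : (v : ZMod q) * (w : ZMod q) = -(n' : ZMod q) := by
        have : ((n' + v * w : ℕ) : ZMod q) = 0 := (ZMod.natCast_eq_zero_iff _ _).mpr hq_dvd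
        push_cast at this
        linear_combination this
      have := hvx₀
      have hcancel : (v : ZMod q) * (w : ZMod q) = (v : ZMod q) * (x₀ : ZMod q) := by
        rw [hzq, hvx₀]
      exact hvunit.mul_left_cancel hcancel
    · intro hmod
      -- w ≡ x₀ mod q implies c ∣ n + d v w
      have hq_dvd : q ∣ n' + v * w := by
        have : ((n' + v * w : ℕ) : ZMod q) = 0 := by
          push_cast
          rw [hmod, mul_comm]
          rw [show ((x₀:ZMod q)) * v = v * x₀ by ring, hvx₀]
          ring
        exact (ZMod.natCast_eq_zero_iff _ _).mp this
      obtain ⟨k, hk⟩ := hq_dvd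
      refine ⟨k, ?_⟩
      rw [hnd, hcdq]
      calc d * n' + d * v * w = d * (n' + v * w) := by ring
        _ = d * (q * k) := by rw [hk]
        _ = d * q * k := by ring
  -- rewrite membership using mod
  have hmem : ∀ w : ℕ, w < c → (c ∣ n + d * v * w ↔ w % q = x₀) := by
    intro w hw
    rw [hsol w hw, ZMod.natCast_eq_natCast_iff]
    unfold Nat.ModEq
    rw [Nat.mod_eq_of_lt hx₀lt]
  -- reindex by t ∈ range d
  have hreindex : ∑ w ∈ (Finset.range c).filter (fun w => c ∣ n + d * v * w),
      EZ c ((m : ZMod c) * (w : ZMod c) - ((d * v : ℕ) : ZMod c))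
      = ∑ t ∈ Finset.range d, EZ c ((m : ZMod c) * ((x₀ + t * q : ℕ) : ZMod c) - ((d * v : ℕ) : ZMod c)) := by
    rw [Finset.sum_nbij' (i := fun w => w / q) (j := fun t => x₀ + t * q)]
    · intro w hw
      simp only [Finset.mem_filter, Finset.mem_range] at hw
      simp only [Finset.mem_range]
      rw [Nat.div_lt_iff_lt_mul hqpos]
      calc w < c := hw.1
        _ = d * q := hcdq
    · intro t ht
      simp only [Finset.mem_range] at ht
      simp only [Finset.mem_filter, Finset.mem_range]
      have hlt : x₀ + t * q < c := by
        calc x₀ + t * q < q + t * q := by omega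
          _ = (t + 1) * q := by ring
          _ ≤ d * q := Nat.mul_le_mul_right q ht
          _ = c := hcdq.symm
      refine ⟨hlt, ?_⟩
      rw [hmem _ hlt]
      rw [Nat.add_mul_mod_self_right, Nat.mod_eq_of_lt hx₀lt]
    · intro w hw
      simp only [Finset.mem_filter, Finset.mem_range] at hw
      have := (hmem w hw.1).mp hw.2
      calc x₀ + w / q * q = w % q + q * (w / q) := by rw [this]; ring
        _ = w := Nat.mod_add_div w q
    · intro t ht
      simp only [Finset.mem_range] at ht
      rw [Nat.add_mul_div_right x₀ t hqpos, Nat.div_eq_of_lt hx₀lt, zero_add]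
    · intro w hw
      simp only [Finset.mem_filter, Finset.mem_range] at hw
      have hmod := (hmem w hw.1).mp hw.2
      have hw' : x₀ + w / q * q = w := by
        calc x₀ + w / q * q = w % q + q * (w / q) := by rw [hmod]; ring
          _ = w := Nat.mod_add_div w q
      rw [hw']
  rw [hreindex]
  -- evaluate the sum over t
  have hterm : ∀ t : ℕ, EZ c ((m : ZMod c) * ((x₀ + t * q : ℕ) : ZMod c) - ((d * v : ℕ) : ZMod c))
      = E c ((m * x₀ - d * v : ℤ)) * E c ((m * q : ℤ) * t) := by
    intro t
    rw [← E_add]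
    have harg : ((m : ZMod c) * ((x₀ + t * q : ℕ) : ZMod c) - ((d * v : ℕ) : ZMod c))
        = ((((m * x₀ - d * v : ℤ)) + (m * q : ℤ) * t : ℤ) : ZMod c) := by
      push_cast; ring
    rw [harg, EZ_intCast]
  simp_rw [hterm, ← Finset.mul_sum]
  have hgeo : ∑ t ∈ Finset.range d, E c ((m * q : ℤ) * t)
      = if d ∣ m then (d : ℂ) else 0 := by
    have hcast : ∀ t : ℕ, E c ((m * q : ℤ) * t) = E d ((m : ℤ) * t) := by
      intro t
      rw [hcdq, mul_comm d q]
      rw [show ((m * q : ℤ) * t) = (q : ℤ) * ((m:ℤ) * t) by push_cast; ring]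
      exact E_mul_left q d hqpos.ne' _
    simp_rw [hcast, sum_E_geom]
    by_cases h : d ∣ m
    · rw [if_pos h, if_pos (Int.natCast_dvd_natCast.mpr h)]
    · rw [if_neg h, if_neg (fun hh => h (Int.natCast_dvd_natCast.mp hh))]
  rw [hgeo]
  by_cases hdm : d ∣ m
  swap
  · rw [if_neg hdm, if_neg (fun h => hdm h.2), mul_zero]
  rw [if_pos hdm, if_pos ⟨hdn, hdm⟩]
  have hmd : (m : ℤ) = (d : ℤ) * ((m / d : ℕ) : ℤ) := by
    exact_mod_cast (Nat.mul_div_cancel' hdm).symm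
  have hE1 : E c ((m * x₀ - d * v : ℤ)) = E q (((m / d : ℕ) * x₀ - v : ℤ)) := by
    rw [hcdq]
    rw [show ((m * x₀ - d * v : ℤ)) = (d : ℤ) * (((m / d : ℕ) * x₀ - v : ℤ)) by
      rw [hmd]; push_cast; ring]
    exact E_mul_left d q hdpos.ne' _
  rw [hE1]
  have hE2 : E q (((m / d : ℕ) * x₀ - v : ℤ))
      = EZ q ((m/d : ℕ) * (-((n' : ℕ) : ZMod q) * ((v : ZMod q))⁻¹) - (v : ZMod q)) := by
    rw [← EZ_intCast]
    congr 1
    have hx₀cast : ((x₀ : ℕ) : ZMod q) = -((n' : ℕ) : ZMod q) * ((v : ZMod q))⁻¹ := by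
      rw [hx₀, ZMod.natCast_val, ZMod.cast_id]
    rw [← hx₀cast]
    simp only [Int.cast_sub, Int.cast_mul, Int.cast_natCast]
  rw [hE2]
  ring


/-- decomposition of range c by gcd with c -/
lemma sum_decomp (c : ℕ) (hc : 0 < c) (f : ℕ → ℂ) :
    ∑ w ∈ Finset.range c, f w
      = ∑ d ∈ c.divisors, ∑ v ∈ (Finset.range (c/d)).filter (fun v => Nat.Coprime v (c/d)),
          f (d * v) := by
  rw [← Finset.sum_fiberwise_of_maps_to (g := fun w => Nat.gcd w c) (t := c.divisors)
      (fun w _ => Nat.mem_divisors.mpr ⟨Nat.gcd_dvd_right w c, hc.ne'⟩)]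
  apply Finset.sum_congr rfl
  intro d hd
  obtain ⟨hddvd, -⟩ := Nat.mem_divisors.mp hd
  have hdpos : 0 < d := Nat.pos_of_dvd_of_pos hddvd hc
  have hcdq : d * (c / d) = c := Nat.mul_div_cancel' hddvd
  rw [Finset.sum_nbij' (i := fun w => w / d) (j := fun v => d * v)]
  · intro w hw
    simp only [Finset.mem_filter, Finset.mem_range] at hw ⊢
    obtain ⟨hwc, hgcd⟩ := hw
    have hdw : d ∣ w := hgcd ▸ Nat.gcd_dvd_left w c
    constructor
    · exact Nat.div_lt_div_of_lt_of_dvd hddvd hwc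
    · have := Nat.coprime_div_gcd_div_gcd (m := w) (n := c) (hgcd ▸ hdpos)
      rwa [hgcd] at this
  · intro v hv
    simp only [Finset.mem_filter, Finset.mem_range] at hv ⊢
    obtain ⟨hvlt, hvcop⟩ := hv
    constructor
    · calc d * v < d * (c / d) := by exact (Nat.mul_lt_mul_left hdpos).mpr hvlt
        _ = c := hcdq
    · conv_lhs => rw [← hcdq]
      rw [Nat.gcd_mul_left]
      rw [Nat.Coprime] at hvcop
      rw [hvcop, mul_one]
  · intro w hw
    simp only [Finset.mem_filter, Finset.mem_range] at hw
    exact Nat.mul_div_cancel' (hw.2 ▸ Nat.gcd_dvd_left w c)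
  · intro v _
    exact Nat.mul_div_cancel_left v hdpos
  · intro w hw
    simp only [Finset.mem_filter, Finset.mem_range] at hw
    rw [Nat.mul_div_cancel' (hw.2 ▸ Nat.gcd_dvd_left w c)]

/-- the negation-inverse bijection on units -/
lemma sum_negInv (q : ℕ) [NeZero q] (a : ℕ) :
    (∑ x : ZMod q, if IsUnit x then EZ q (-((a : ZMod q)) * x⁻¹ - x) else 0)
      = kloosZ a 1 q := by
  rw [kloosZ]
  rw [← Finset.sum_filter, ← Finset.sum_filter]
  rw [Finset.sum_nbij' (i := fun x => -x⁻¹) (j := fun y => -y⁻¹)]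
  · intro x hx
    simp only [Finset.mem_filter, Finset.mem_univ, true_and] at hx ⊢
    have : IsUnit (x⁻¹ : ZMod q) := by
      obtain ⟨u, rfl⟩ := hx
      rw [ZMod.inv_coe_unit]
      exact (u⁻¹).isUnit
    exact this.neg
  · intro y hy
    simp only [Finset.mem_filter, Finset.mem_univ, true_and] at hy ⊢
    have : IsUnit (y⁻¹ : ZMod q) := by
      obtain ⟨u, rfl⟩ := hy
      rw [ZMod.inv_coe_unit]
      exact (u⁻¹).isUnit
    exact this.neg
  · intro x hx
    simp only [Finset.mem_filter, Finset.mem_univ, true_and] at hx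
    have h1 : (-x⁻¹)⁻¹ = -x := by
      apply ZMod.inv_eq_of_mul_eq_one
      rw [neg_mul_neg, ZMod.inv_mul_of_unit x hx]
    rw [h1, neg_neg]
  · intro y hy
    simp only [Finset.mem_filter, Finset.mem_univ, true_and] at hy
    have h1 : (-y⁻¹)⁻¹ = -y := by
      apply ZMod.inv_eq_of_mul_eq_one
      rw [neg_mul_neg, ZMod.inv_mul_of_unit y hy]
    rw [h1, neg_neg]
  · intro x hx
    simp only [Finset.mem_filter, Finset.mem_univ, true_and] at hx
    have h1 : (-x⁻¹)⁻¹ = -x := by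
      apply ZMod.inv_eq_of_mul_eq_one
      rw [neg_mul_neg, ZMod.inv_mul_of_unit x hx]
    congr 1
    rw [h1]
    ring

/-- Selberg's identity: S(m,n;c) = ∑_{d | (m,n,c)} d·S(mn/d², 1; c/d). -/
theorem selberg_identity (m n c : ℕ) (hm : 0 < m) (hn : 0 < n) (hc : 0 < c) :
    kloos m n c = ∑ d ∈ (Nat.gcd m (Nat.gcd n c)).divisors,
      (d : ℂ) * kloos (m * n / d ^ 2) 1 (c / d) := by
  haveI : NeZero c := ⟨hc.ne'⟩
  rw [kloos_eq_kloosZ, cruxA]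
  rw [sum_zmod_eq_range c
    (fun u => ∑ x : ZMod c, if (n : ZMod c) + u * x = 0 then EZ c ((m : ZMod c) * x - u) else 0)]
  rw [sum_decomp c hc
    (fun w => ∑ x : ZMod c, if (n : ZMod c) + (w : ZMod c) * x = 0
      then EZ c ((m : ZMod c) * x - (w : ZMod c)) else 0)]
  have hper : ∀ d ∈ c.divisors,
      (∑ v ∈ (Finset.range (c/d)).filter (fun v => Nat.Coprime v (c/d)),
        ∑ x : ZMod c, if (n : ZMod c) + ((d * v : ℕ) : ZMod c) * x = 0
          then EZ c ((m : ZMod c) * x - ((d * v : ℕ) : ZMod c)) else 0)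
      = if d ∣ n ∧ d ∣ m then (d:ℂ) * kloos (m * n / d ^ 2) 1 (c / d) else 0 := by
    intro d hd
    obtain ⟨hddvd, -⟩ := Nat.mem_divisors.mp hd
    have hdpos : 0 < d := Nat.pos_of_dvd_of_pos hddvd hc
    have hqpos : 0 < c / d := Nat.div_pos (Nat.le_of_dvd hc hddvd) hdpos
    haveI : NeZero (c / d) := ⟨hqpos.ne'⟩
    rw [Finset.sum_congr rfl (fun v hv => by
      simp only [Finset.mem_filter, Finset.mem_range] at hv
      exact Heval m n c d v hc hddvd hdpos hv.1 hv.2)]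
    by_cases hcase : d ∣ n ∧ d ∣ m
    · rw [if_pos hcase]
      simp only [if_pos hcase]
      rw [← Finset.mul_sum, kloos_eq_kloosZ]
      congr 1
      have hdivmul : m / d * (n / d) = m * n / d ^ 2 := by
        rw [pow_two]
        exact Nat.div_mul_div_comm hcase.2 hcase.1
      rw [sum_units_eq (c/d)
        (fun x => EZ (c/d) (((m/d : ℕ) : ZMod (c/d)) * (-(((n/d : ℕ) : ZMod (c/d))) * x⁻¹) - x))]
      rw [← sum_negInv (c/d) (m * n / d ^ 2)]
      apply Finset.sum_congr rfl
      intro x _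
      by_cases hx : IsUnit x
      · rw [if_pos hx, if_pos hx]
        congr 1
        rw [← hdivmul]
        push_cast
        ring
      · rw [if_neg hx, if_neg hx]
    · rw [if_neg hcase]
      apply Finset.sum_eq_zero
      intro v _
      rw [if_neg (fun h => hcase ⟨h.1, h.2⟩)]
  rw [Finset.sum_congr rfl hper]
  rw [← Finset.sum_filter]
  have hset : c.divisors.filter (fun d => d ∣ n ∧ d ∣ m) = (Nat.gcd m (Nat.gcd n c)).divisors := by
    ext d
    simp only [Finset.mem_filter, Nat.mem_divisors, Nat.dvd_gcd_iff]
    constructor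
    · rintro ⟨⟨hdc, -⟩, hdn2, hdm2⟩
      exact ⟨⟨hdm2, hdn2, hdc⟩, (Nat.gcd_pos_of_pos_left _ hm).ne'⟩
    · rintro ⟨⟨hdm2, hdn2, hdc⟩, -⟩
      exact ⟨⟨hdc, hc.ne'⟩, hdn2, hdm2⟩
  rw [hset]
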